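/- KKM theorem for families of convex sets: Let n be a natural number, let A be a nonempty compact subset of ℝⁿ, and let {C_a}_{a ∈ A} be a family of subsets of A, indexed by the points of A, such that each C_a is closed and convex, and such that for every finite subset F of A the convex hull of F is contained in ⋃_{a ∈ F} C_a. Then the intersection ⋂_{a ∈ A} C_a is nonempty. -/

import Mathlib

open Set

/-- Berge's intersection theorem: finitely many nonempty compact convex sets whose union
is convex and such that each subfamily omitting one set has nonempty intersection have
nonempty total intersection. -/
lemma berge_inter {ι : Type*} [DecidableEq ι] {E : Type*} [NormedAddCommGroup E]
    [NormedSpace ℝ E] :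
    ∀ (F : Finset ι) (C : ι → Set E),
      (∀ i ∈ F, IsCompact (C i)) → (∀ i ∈ F, Convex ℝ (C i)) →
      Convex ℝ (⋃ i ∈ F, C i) →
      (∀ i ∈ F, (C i).Nonempty) →
      (∀ i ∈ F, (⋂ j ∈ F.erase i, C j).Nonempty) →
      F.Nonempty → (⋂ i ∈ F, C i).Nonempty := by
  intro F
  induction F using Finset.strongInduction with
  | _ F ih =>
  intro C hcomp hconv hU hne hcap hFne
  obtain ⟨k, hk⟩ := hFne
  by_cases h1 : F = {k}
  · subst h1; simpa using hne k (by simp)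
  -- there are at least two elements
  by_contra hcontra
  rw [Set.not_nonempty_iff_eq_empty] at hcontra
  set G := F.erase k with hG
  have hGsub : G ⊆ F := Finset.erase_subset _ _
  have hGne : G.Nonempty := by
    rcases Finset.eq_singleton_or_nontrivial hk with h | h
    · exact absurd h h1
    · obtain ⟨j, hj, hjk⟩ := h.exists_ne k
      exact ⟨j, Finset.mem_erase.2 ⟨hjk, hj⟩⟩
  set B := ⋂ j ∈ G, C j with hB
  have hBne : B.Nonempty := hcap k hk
  obtain ⟨j₀, hj₀⟩ := hGne
  have hBclosed : IsClosed B :=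
    isClosed_biInter fun j hj => (hcomp j (hGsub hj)).isClosed
  have hBcomp : IsCompact B :=
    (hcomp j₀ (hGsub hj₀)).of_isClosed_subset hBclosed (Set.biInter_subset_of_mem hj₀)
  have hBconv : Convex ℝ B := convex_iInter₂ fun j hj => hconv j (hGsub hj)
  have hdisj : Disjoint (C k) B := by
    rw [Set.disjoint_iff_inter_eq_empty]
    have hins : (⋂ i ∈ F, C i) = C k ∩ B := by
      conv_lhs => rw [← Finset.insert_erase hk]
      simp [hB, hG]
    rw [← hins, hcontra]
  obtain ⟨f, u, v, hfu, huv, hfv⟩ :=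
    geometric_hahn_banach_compact_closed (hconv k hk) (hcomp k hk) hBconv hBclosed hdisj
  have hCk_lt : ∀ x ∈ C k, f x < u := hfu
  have hB_gt : ∀ x ∈ B, u < f x := fun x hx => huv.trans (hfv x hx)
  set H := {x : E | f x = u} with hH
  have hHconv : Convex ℝ H := convex_hyperplane (f.toLinearMap.isLinear) u
  have hHclosed : IsClosed H := isClosed_eq f.continuous continuous_const
  set C' : ι → Set E := fun i => C i ∩ H with hC'
  -- the union of the C' over G is (⋃ i ∈ F, C i) ∩ H
  have hCkH : C k ∩ H = ∅ := by
    ext x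
    simp only [Set.mem_inter_iff, Set.mem_empty_iff_false, iff_false, hH, Set.mem_setOf_eq]
    rintro ⟨hx1, hx2⟩
    exact absurd hx2 (ne_of_lt (hCk_lt x hx1))
  have hUnion' : (⋃ i ∈ G, C' i) = (⋃ i ∈ F, C i) ∩ H := by
    ext x
    simp only [Set.mem_iUnion, Set.mem_inter_iff, hC', exists_prop]
    constructor
    · rintro ⟨i, hi, hxi, hxH⟩
      exact ⟨⟨i, hGsub hi, hxi⟩, hxH⟩
    · rintro ⟨⟨i, hi, hxi⟩, hxH⟩
      rcases eq_or_ne i k with rfl | hik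
      · exact absurd (Set.mem_inter hxi hxH) (by rw [hCkH]; exact Set.notMem_empty x)
      · exact ⟨i, Finset.mem_erase.2 ⟨hik, hi⟩, hxi, hxH⟩
  have hU' : Convex ℝ (⋃ i ∈ G, C' i) := by rw [hUnion']; exact hU.inter hHconv
  have hcomp' : ∀ i ∈ G, IsCompact (C' i) := fun i hi =>
    (hcomp i (hGsub hi)).inter_right hHclosed
  have hconv' : ∀ i ∈ G, Convex ℝ (C' i) := fun i hi => (hconv i (hGsub hi)).inter hHconv
  -- key: intersections of the C' omitting one index are nonempty
  have hcap' : ∀ i ∈ G, (⋂ j ∈ G.erase i, C' j).Nonempty := by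
    intro i hi
    have hik : i ≠ k := (Finset.mem_erase.1 hi).1
    set S := ⋂ j ∈ G.erase i, C j with hS
    have hSconv : Convex ℝ S :=
      convex_iInter₂ fun j hj => hconv j (hGsub (Finset.mem_of_mem_erase hj))
    obtain ⟨p, hp⟩ := hcap i (hGsub hi)
    have hpS : p ∈ S := by
      refine Set.mem_iInter₂.2 fun j hj => Set.mem_iInter₂.1 hp j ?_
      have h1 := Finset.mem_erase.1 hj
      exact Finset.mem_erase.2 ⟨h1.1, Finset.mem_of_mem_erase h1.2⟩
    have hpk : p ∈ C k := Set.mem_iInter₂.1 hp k (Finset.mem_erase.2 ⟨Ne.symm hik, hk⟩)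
    obtain ⟨q, hq⟩ := hBne
    have hqS : q ∈ S := by
      refine Set.mem_iInter₂.2 fun j hj => Set.mem_iInter₂.1 hq j (Finset.mem_of_mem_erase hj)
    have hIVT := hSconv.isPreconnected.intermediate_value hpS hqS f.continuous.continuousOn
    have hu : u ∈ Set.Icc (f p) (f q) := ⟨(hCk_lt p hpk).le, (hB_gt q hq).le⟩
    obtain ⟨z, hzS, hzf⟩ := hIVT hu
    exact ⟨z, Set.mem_iInter₂.2 fun j hj =>
      ⟨Set.mem_iInter₂.1 hzS j hj, by simpa [hH] using hzf⟩⟩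
  -- each C' is nonempty
  have hne' : ∀ i ∈ G, (C' i).Nonempty := by
    intro i hi
    by_cases hsing : ∃ j ∈ G, j ≠ i
    · obtain ⟨j, hj, hji⟩ := hsing
      obtain ⟨z, hz⟩ := hcap' j hj
      exact ⟨z, Set.mem_iInter₂.1 hz i (Finset.mem_erase.2 ⟨Ne.symm hji, hi⟩)⟩
    · -- G = {i}
      push_neg at hsing
      have hGi : G = {i} := by
        apply Finset.eq_singleton_iff_unique_mem.2
        exact ⟨hi, fun j hj => hsing j hj⟩
      obtain ⟨p, hp⟩ := hne k hk
      obtain ⟨q, hq⟩ := hBne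
      have hqCi : q ∈ C i := by
        have := Set.mem_iInter₂.1 hq i hi; exact this
      have hpU : p ∈ ⋃ j ∈ F, C j := Set.mem_biUnion hk hp
      have hqU : q ∈ ⋃ j ∈ F, C j := Set.mem_biUnion (hGsub hi) hqCi
      have hIVT := hU.isPreconnected.intermediate_value hpU hqU f.continuous.continuousOn
      have hu : u ∈ Set.Icc (f p) (f q) := ⟨(hCk_lt p hp).le, (hB_gt q hq).le⟩
      obtain ⟨z, hzU, hzf⟩ := hIVT hu
      have hzH : z ∈ H := by simpa [hH] using hzf
      have hzmem : z ∈ ⋃ j ∈ G, C' j := by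
        rw [hUnion']; exact ⟨hzU, hzH⟩
      rw [hGi] at hzmem
      exact ⟨z, by simpa using hzmem⟩
  have hGss : G ⊂ F := Finset.erase_ssubset hk
  obtain ⟨w, hw⟩ := ih G hGss C' hcomp' hconv' hU' hne' hcap' ⟨j₀, hj₀⟩
  have hwB : w ∈ B :=
    Set.mem_iInter₂.2 fun j hj => (Set.mem_iInter₂.1 hw j hj).1
  have hwH : w ∈ H := (Set.mem_iInter₂.1 hw j₀ hj₀).2
  have hlt : u < f w := hB_gt w hwB
  rw [Set.mem_setOf_eq] at hwH
  exact absurd hwH (ne_of_gt hlt)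

/-- KKM theorem for families of convex sets: if `A ⊆ ℝⁿ` is nonempty and compact, and
`{C a}_{a ∈ A}` is a family of closed convex subsets of `A` such that for every finite
`F ⊆ A` the convex hull of `F` is contained in `⋃ a ∈ F, C a`, then `⋂ a ∈ A, C a` is
nonempty. -/
theorem kkm_convex (n : ℕ) (A : Set (EuclideanSpace ℝ (Fin n)))
    (hA : A.Nonempty) (hAcomp : IsCompact A)
    (C : EuclideanSpace ℝ (Fin n) → Set (EuclideanSpace ℝ (Fin n)))
    (hsub : ∀ a ∈ A, C a ⊆ A)
    (hclosed : ∀ a ∈ A, IsClosed (C a))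
    (hconv : ∀ a ∈ A, Convex ℝ (C a))
    (hkkm : ∀ F : Finset (EuclideanSpace ℝ (Fin n)), ↑F ⊆ A →
      convexHull ℝ (↑F : Set (EuclideanSpace ℝ (Fin n))) ⊆ ⋃ a ∈ F, C a) :
    (⋂ a ∈ A, C a).Nonempty := by
  classical
  -- each point is in its own set
  have hmem : ∀ a ∈ A, a ∈ C a := by
    intro a ha
    have h := hkkm {a} (by simpa using ha)
    have h2 : a ∈ ⋃ b ∈ ({a} : Finset (EuclideanSpace ℝ (Fin n))), C b :=
      h (subset_convexHull ℝ _ (by simp))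
    simpa using h2
  -- finite intersection property, strengthened to stay in the convex hull
  have key : ∀ F : Finset (EuclideanSpace ℝ (Fin n)), ↑F ⊆ A → F.Nonempty →
      (⋂ a ∈ F, (C a ∩ convexHull ℝ (↑F : Set (EuclideanSpace ℝ (Fin n))))).Nonempty := by
    intro F
    induction F using Finset.strongInduction with
    | _ F ih =>
    intro hFA hFne
    set K := convexHull ℝ (↑F : Set (EuclideanSpace ℝ (Fin n))) with hK
    have hKcomp : IsCompact K := F.finite_toSet.isCompact_convexHull ℝ
    have hKconv : Convex ℝ K := convex_convexHull ℝ _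
    refine berge_inter F (fun a => C a ∩ K) ?_ ?_ ?_ ?_ ?_ hFne
    · exact fun a ha => hKcomp.inter_left (hclosed a (hFA ha))
    · exact fun a ha => (hconv a (hFA ha)).inter hKconv
    · have hUK : (⋃ a ∈ F, C a ∩ K) = K := by
        apply Set.Subset.antisymm
        · exact Set.iUnion₂_subset fun a ha => Set.inter_subset_right
        · intro x hx
          obtain ⟨a, ha, hxa⟩ := Set.mem_iUnion₂.1 (hkkm F hFA hx)
          exact Set.mem_iUnion₂.2 ⟨a, ha, hxa, hx⟩
      rw [hUK]; exact hKconv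
    · intro a ha
      exact ⟨a, hmem a (hFA ha), subset_convexHull ℝ _ (by exact_mod_cast ha)⟩
    · intro a ha
      rcases (F.erase a).eq_empty_or_nonempty with he | hne
      · rw [he]; simp
      · have hss : F.erase a ⊂ F := Finset.erase_ssubset ha
        have hsubA : ↑(F.erase a) ⊆ A :=
          Set.Subset.trans (by exact_mod_cast Finset.erase_subset a F) hFA
        obtain ⟨x, hx⟩ := ih (F.erase a) hss hsubA hne
        refine ⟨x, Set.mem_iInter₂.2 fun j hj => ?_⟩
        have hxj := Set.mem_iInter₂.1 hx j hj
        exact ⟨hxj.1, convexHull_mono (by exact_mod_cast Finset.erase_subset a F) hxj.2⟩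
  -- compactness step
  by_contra hcontra
  rw [Set.not_nonempty_iff_eq_empty] at hcontra
  have hempty : (A ∩ ⋂ (a : A), C ↑a) = ∅ := by
    have hbi : (⋂ (a : A), C ↑a) = ⋂ a ∈ A, C a := by
      rw [Set.biInter_eq_iInter]
    rw [hbi, hcontra, Set.inter_empty]
  obtain ⟨t, ht⟩ := hAcomp.elim_finite_subfamily_closed (fun a : A => C ↑a)
    (fun a => hclosed ↑a a.2) hempty
  rcases t.eq_empty_or_nonempty with rfl | htne
  · simp only [Finset.notMem_empty, Set.iInter_of_empty, Set.iInter_univ,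
      Set.inter_univ] at ht
    exact absurd ht (Set.nonempty_iff_ne_empty.1 hA)
  · set F : Finset (EuclideanSpace ℝ (Fin n)) :=
      t.image (fun a : A => (a : EuclideanSpace ℝ (Fin n))) with hF
    have hFA : ↑F ⊆ A := by
      intro x hx
      simp only [hF, Finset.coe_image, Set.mem_image] at hx
      obtain ⟨a, _, rfl⟩ := hx
      exact a.2
    have hFne : F.Nonempty := htne.image _
    obtain ⟨x, hx⟩ := key F hFA hFne
    have hxC : ∀ a ∈ F, x ∈ C a := fun a ha => (Set.mem_iInter₂.1 hx a ha).1
    have hxA : x ∈ A := by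
      obtain ⟨a, ha⟩ := hFne
      exact hsub a (hFA ha) (hxC a ha)
    have hxmem : x ∈ A ∩ ⋂ a ∈ t, C ↑a := by
      refine ⟨hxA, Set.mem_iInter₂.2 fun a ha => ?_⟩
      exact hxC ↑a (Finset.mem_image_of_mem _ ha)
    rw [ht] at hxmem
    exact hxmem
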